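/- Suppose d_i : S_{-i} → ℝ (i = 1,…,n) satisfy, for every s ∈ S and every i ∈ {2,…,n}, w_1(s_{-1}) d_i(s_{-i}) − w_i(s_{-i}) d_1(s_{-1}) = w_1(s_{-1}) c_i(s) − w_i(s_{-i}) c_1(s). Then the function P : S → ℝ defined by P(s) := (c_1(s) − d_1(s_{-1})) / w_1(s_{-1}) is a coset weighted potential function for c with respect to w; that is, for every i, all x, y ∈ S_i and every s_{-i}: c_i(x,s_{-i}) − c_i(y,s_{-i}) = w_i(s_{-i})(P(x,s_{-i}) − P(y,s_{-i})). -/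

import Mathlib

/-- `f : S → ℝ` depends only on the strategies of the players other than `i`
(i.e. it is a function of `s_{-i}`). -/
def IndepOf {n : ℕ} {k : Fin n → ℕ} (i : Fin n) (f : (∀ j, Fin (k j)) → ℝ) : Prop :=
  ∀ (s : ∀ j, Fin (k j)) (x : Fin (k i)), f (Function.update s i x) = f s

/-- `P` is a coset weighted potential function for the game `c` with respect to the
coset-depending weights `w`. -/
def IsCWPotentialFn {n : ℕ} {k : Fin n → ℕ} (c w : Fin n → (∀ j, Fin (k j)) → ℝ)
    (P : (∀ j, Fin (k j)) → ℝ) : Prop :=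
  ∀ (i : Fin n) (s : ∀ j, Fin (k j)) (x y : Fin (k i)),
    c i (Function.update s i x) - c i (Function.update s i y)
      = w i s * (P (Function.update s i x) - P (Function.update s i y))

/-- **Theorem 3.1, "moreover" part (formula (3.8.0)).** If the functions `d_i` of
`s_{-i}` satisfy, for every `s ∈ S` and every `i ∈ {2,…,n}`,
`w_1(s_{-1}) d_i(s_{-i}) − w_i(s_{-i}) d_1(s_{-1}) = w_1(s_{-1}) c_i(s) − w_i(s_{-i}) c_1(s)`,
then `P(s) := (c_1(s) − d_1(s_{-1})) / w_1(s_{-1})` is a coset weighted potential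
function for `c` w.r.t. `w`. -/
theorem potential_formula (n : ℕ) (hn : 2 ≤ n) (k : Fin n → ℕ)
    (hk : ∀ i, 2 ≤ k i) (c w : Fin n → (∀ j, Fin (k j)) → ℝ)
    (hw : ∀ i s, 0 < w i s) (hwI : ∀ i, IndepOf i (w i))
    (d : Fin n → (∀ j, Fin (k j)) → ℝ) (hd : ∀ i, IndepOf i (d i))
    (heq : ∀ (s : ∀ j, Fin (k j)) (i : Fin n), i ≠ ⟨0, by omega⟩ →
      w ⟨0, by omega⟩ s * d i s - w i s * d ⟨0, by omega⟩ s
        = w ⟨0, by omega⟩ s * c i s - w i s * c ⟨0, by omega⟩ s) :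
    IsCWPotentialFn c w
      (fun s => (c ⟨0, by omega⟩ s - d ⟨0, by omega⟩ s) / w ⟨0, by omega⟩ s) := by
  intro i s x y
  set z : Fin n := ⟨0, by omega⟩ with hz
  simp only
  by_cases hi : i = z
  · subst hi
    rw [hwI z s x, hwI z s y, hd z s x, hd z s y]
    have hne := (hw z s).ne'
    field_simp
    ring
  · have h1 := heq (Function.update s i x) i hi
    have h2 := heq (Function.update s i y) i hi
    rw [hwI i s x, hd i s x] at h1
    rw [hwI i s y, hd i s y] at h2
    have hzx := (hw z (Function.update s i x)).ne'
    have hzy := (hw z (Function.update s i y)).ne'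
    have hne := (hw i s).ne'
    have ex : (c z (Function.update s i x) - d z (Function.update s i x)) /
        w z (Function.update s i x) = (c i (Function.update s i x) - d i s) / w i s := by
      rw [div_eq_div_iff hzx hne]; linarith
    have ey : (c z (Function.update s i y) - d z (Function.update s i y)) /
        w z (Function.update s i y) = (c i (Function.update s i y) - d i s) / w i s := by
      rw [div_eq_div_iff hzy hne]; linarith
    rw [ex, ey]
    field_simp
    ring
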